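/- Sequential ordering of trace transitions: in the trace workflow W^τ, if a sequence of valid firings C contains a firing of transition t_{e_i} (1 ≤ i ≤ n), then C contains an earlier firing of transition t_{e_{i-1}}; moreover if the initial marking has exactly one token in start then each t_{e_i} occurs at most once in C. -/

import Mathlib

/-- A DAW-net. -/
structure DAWNet (P T V O : Type) where
  pre : T → Set P
  post : T → Set P
  wr : T → V → Option (Set O)
  gd : T → ((V → Option O) → Prop)

/-- Valid firing of a transition `t` from state `(M, η)` to state `(M', η')`. -/
def ValidFiring {P T V O : Type} (W : DAWNet P T V O)
    (M : P → ℕ) (η : V → Option O) (t : T) (M' : P → ℕ) (η' : V → Option O) : Prop :=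
  (∀ p ∈ W.pre t, 0 < M p) ∧
  W.gd t η ∧
  (∀ p, (p ∈ W.pre t ∧ p ∉ W.post t → M' p = M p - 1) ∧
        (p ∈ W.post t ∧ p ∉ W.pre t → M' p = M p + 1) ∧
        ((p ∈ W.pre t ↔ p ∈ W.post t) → M' p = M p)) ∧
  (∀ v (s : Set O), W.wr t v = some s →
      (s = ∅ → η' v = none) ∧ (s.Nonempty → ∃ o ∈ s, η' v = some o)) ∧
  (∀ v, W.wr t v = none → η' v = η v)

/-- Sequences of valid firings. -/
inductive FiringSeq {P T V O : Type} (W : DAWNet P T V O) :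
    ((P → ℕ) × (V → Option O)) → List (T × (P → ℕ) × (V → Option O)) →
    ((P → ℕ) × (V → Option O)) → Prop
  | nil (s : (P → ℕ) × (V → Option O)) : FiringSeq W s [] s
  | cons {s : (P → ℕ) × (V → Option O)} {t : T} {M' : P → ℕ} {η' : V → Option O}
      {l : List (T × (P → ℕ) × (V → Option O))} {e : (P → ℕ) × (V → Option O)} :
      ValidFiring W s.1 s.2 t M' η' → FiringSeq W (M', η') l e →
      FiringSeq W s ((t, M', η') :: l) e

open scoped Classical

/-- Count of entries of a firing list weighted by `f` of the transition. -/
private def cntF {T Pl V O : Type} (f : T → ℕ)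
    (l : List (T × (Pl → ℕ) × (V → Option O))) : ℕ :=
  (l.map (fun x => f x.1)).sum

private lemma cntF_append {T Pl V O : Type} (f : T → ℕ)
    (l₁ l₂ : List (T × (Pl → ℕ) × (V → Option O))) :
    cntF f (l₁ ++ l₂) = cntF f l₁ + cntF f l₂ := by
  simp [cntF]

/-- Main counting invariant along a sequence of valid firings. -/
private lemma cnt_inv {Pl T V O : Type} (W : DAWNet Pl T V O) (q : Pl) (ca cb : T → ℕ)
    (H : ∀ t M η M' η', ValidFiring W M η t M' η' → M' q + cb t ≤ M q + ca t) :
    ∀ {s l e}, FiringSeq W s l e → e.1 q + cntF cb l ≤ s.1 q + cntF ca l := by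
  intro s l e h
  induction h with
  | nil s => simp [cntF]
  | cons hv hseq ih =>
      have hH := H _ _ _ _ _ hv
      simp only [cntF, List.map_cons, List.sum_cons] at *
      omega

/-- Each position of a firing sequence corresponds to a valid firing from the
intermediate state reached by the prefix. -/
private lemma firing_split {Pl T V O : Type} {W : DAWNet Pl T V O} :
    ∀ {s : (Pl → ℕ) × (V → Option O)} {l} {e}, FiringSeq W s l e →
      ∀ m : Fin l.length, ∃ s', FiringSeq W s (l.take m.val) s' ∧
        ValidFiring W s'.1 s'.2 (l.get m).1 (l.get m).2.1 (l.get m).2.2 := by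
  intro s l e h
  induction h with
  | nil s => intro m; exact absurd m.2 (by simp)
  | @cons s t M' η' l e hv hseq ih =>
      intro m
      rcases m with ⟨mv, hm⟩
      cases mv with
      | zero => exact ⟨s, FiringSeq.nil s, hv⟩
      | succ j =>
          obtain ⟨s', h1, h2⟩ := ih ⟨j, by simpa using hm⟩
          exact ⟨s', FiringSeq.cons hv h1, h2⟩

private lemma one_le_cnt {Pl T V O : Type} (a : T) :
    ∀ (l : List (T × (Pl → ℕ) × (V → Option O))) (j : Fin l.length),
      (l.get j).1 = a → 1 ≤ cntF (fun t => if t = a then 1 else 0) l := by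
  intro l
  induction l with
  | nil => exact fun j => absurd j.2 (by simp)
  | cons x l ih =>
      rintro ⟨jv, hj⟩ hget
      cases jv with
      | zero =>
          simp only [List.get] at hget
          simp [cntF, hget]
      | succ j =>
          have := ih ⟨j, by simpa using hj⟩ hget
          simp only [cntF, List.map_cons, List.sum_cons] at *
          omega

private lemma exists_of_cnt_pos {Pl T V O : Type} (a : T)
    (l : List (T × (Pl → ℕ) × (V → Option O)))
    (h : 0 < cntF (fun t => if t = a then 1 else 0) l) :
    ∃ j : Fin l.length, (l.get j).1 = a := by
  induction l with
  | nil => simp [cntF] at h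
  | cons x l ih =>
      by_cases hx : x.1 = a
      · exact ⟨⟨0, by simp⟩, hx⟩
      · simp only [cntF, List.map_cons, List.sum_cons, if_neg hx] at h
        obtain ⟨j, hj⟩ := ih (by simpa [cntF] using h)
        exact ⟨j.succ, hj⟩

private lemma two_le_cnt_aux {Pl T V O : Type} (a : T)
    (l : List (T × (Pl → ℕ) × (V → Option O))) (m m' : Fin l.length)
    (hlt : (m : ℕ) < (m' : ℕ))
    (h1 : (l.get m).1 = a) (h2 : (l.get m').1 = a) :
    2 ≤ cntF (fun t => if t = a then 1 else 0) l := by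
  have hsplit := List.take_append_drop m'.val l
  have hdrop : l.drop m'.val = l.get m' :: l.drop (m'.val + 1) :=
    List.drop_eq_getElem_cons m'.2
  have hm : (m : ℕ) < (l.take m'.val).length := by
    simp [List.length_take]
    omega
  have htake : 1 ≤ cntF (fun t => if t = a then 1 else 0) (l.take m'.val) := by
    refine one_le_cnt a _ ⟨m.val, hm⟩ ?_
    show ((l.take m'.val)[(m : ℕ)]).1 = a
    rw [List.getElem_take]
    exact h1
  calc 2 ≤ cntF (fun t => if t = a then 1 else 0) (l.take m'.val) +
          cntF (fun t => if t = a then 1 else 0) (l.drop m'.val) := by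
        rw [hdrop]
        have hone : (if (l.get m').1 = a then (1:ℕ) else 0) = 1 := if_pos h2
        simp only [cntF, List.map_cons, List.sum_cons, hone] at *
        omega
    _ = cntF (fun t => if t = a then 1 else 0) l := by
        rw [← cntF_append, hsplit]

private lemma two_le_cnt {Pl T V O : Type} (a : T)
    (l : List (T × (Pl → ℕ) × (V → Option O))) (m m' : Fin l.length)
    (hne : m ≠ m') (h1 : (l.get m).1 = a) (h2 : (l.get m').1 = a) :
    2 ≤ cntF (fun t => if t = a then 1 else 0) l := by
  rcases lt_trichotomy (m : ℕ) (m' : ℕ) with hlt | heq | hlt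
  · exact two_le_cnt_aux a l m m' hlt h1 h2
  · exact absurd (Fin.ext heq) hne
  · exact two_le_cnt_aux a l m' m hlt h2 h1

/-- Sequential ordering of trace transitions in the trace workflow `W^τ`
(new places `p_{e_0}, …, p_{e_n}` indexed by `Fin (n+1)`, new transitions
`tn 0 = start_t = t_{e_0}, tn 1 = t_{e_1}, …, tn n = t_{e_n}`): if a sequence of valid
firings contains a firing of `t_{e_i}` (1 ≤ i ≤ n) then it contains an earlier firing of
`t_{e_{i-1}}`; moreover, if the initial marking has exactly one token in `start` then
each `t_{e_i}` occurs at most once. -/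
theorem trace_transitions_sequential {P Tτ V O : Type} {n : ℕ}
    (Wτ : DAWNet (P ⊕ Fin (n+1)) Tτ V O)
    (tn : Fin (n+1) → Tτ) (start : P)
    (htn : Function.Injective tn)
    (hprod : ∀ i : Fin (n+1), Sum.inr i ∈ Wτ.post (tn i))
    (huniq : ∀ (i : Fin (n+1)) (t : Tτ), Sum.inr i ∈ Wτ.post t → t = tn i)
    (hpre0 : Wτ.pre (tn 0) = {Sum.inl start})
    (hchain : ∀ i : Fin n, Sum.inr i.castSucc ∈ Wτ.pre (tn i.succ))
    (hout : ∀ (i : Fin n) (t : Tτ), Sum.inr i.castSucc ∈ Wτ.pre t → t = tn i.succ)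
    (hstart : ∀ t : Tτ, Sum.inl start ∉ Wτ.post t)
    (M0 : (P ⊕ Fin (n+1)) → ℕ) (η0 : V → Option O)
    (hz : ∀ q, q ≠ Sum.inl start → M0 q = 0)
    (l : List (Tτ × ((P ⊕ Fin (n+1)) → ℕ) × (V → Option O)))
    (e : ((P ⊕ Fin (n+1)) → ℕ) × (V → Option O))
    (h : FiringSeq Wτ (M0, η0) l e) :
    (∀ (i : Fin n) (m : Fin l.length), (l.get m).1 = tn i.succ →
      ∃ r : Fin l.length, (r : ℕ) < (m : ℕ) ∧ (l.get r).1 = tn i.castSucc) ∧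
    (M0 (Sum.inl start) = 1 →
      ∀ (i : Fin (n+1)) (m m' : Fin l.length),
        (l.get m).1 = tn i → (l.get m').1 = tn i → m = m') := by
  -- step bound for chain places
  have Hchain : ∀ i : Fin n, ∀ t M η M' η', ValidFiring Wτ M η t M' η' →
      M' (Sum.inr i.castSucc) + (if t = tn i.succ then 1 else 0) ≤
        M (Sum.inr i.castSucc) + (if t = tn i.castSucc then 1 else 0) := by
    intro i t M η M' η' hv
    have upd := hv.2.2.1 (Sum.inr i.castSucc)
    have hne : tn i.castSucc ≠ tn i.succ := by
      intro hEq
      exact absurd (htn hEq) (Fin.ne_of_lt (Fin.castSucc_lt_succ (i := i)))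
    by_cases hta : t = tn i.castSucc
    · have hnpre : Sum.inr i.castSucc ∉ Wτ.pre t := by
        intro hp; exact hne (hta.symm.trans (hout i t hp))
      have hpost : Sum.inr i.castSucc ∈ Wτ.post t := by
        rw [hta]; exact hprod i.castSucc
      have hM : M' (Sum.inr i.castSucc) = M (Sum.inr i.castSucc) + 1 :=
        upd.2.1 ⟨hpost, hnpre⟩
      have htb : t ≠ tn i.succ := fun hEq => hne (hta.symm.trans hEq)
      rw [if_pos hta, if_neg htb, hM]
    · by_cases htb : t = tn i.succ
      · have hnpost : Sum.inr i.castSucc ∉ Wτ.post t := by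
          intro hp
          exact hne ((huniq i.castSucc t hp).symm.trans htb)
        have hpre : Sum.inr i.castSucc ∈ Wτ.pre t := by
          rw [htb]; exact hchain i
        have hM : M' (Sum.inr i.castSucc) = M (Sum.inr i.castSucc) - 1 :=
          upd.1 ⟨hpre, hnpost⟩
        have h0 : 0 < M (Sum.inr i.castSucc) := hv.1 _ hpre
        rw [if_pos htb, if_neg hta, hM]
        omega
      · have hnpre : Sum.inr i.castSucc ∉ Wτ.pre t := fun hp => htb (hout i t hp)
        have hnpost : Sum.inr i.castSucc ∉ Wτ.post t := fun hp => hta (huniq i.castSucc t hp)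
        have hM := upd.2.2 (iff_of_false hnpre hnpost)
        rw [if_neg hta, if_neg htb, hM]
  constructor
  · -- first part: earlier firing exists
    intro i m hm
    obtain ⟨s', hseq', hv⟩ := firing_split h m
    rw [hm] at hv
    have hq : 0 < s'.1 (Sum.inr i.castSucc) := hv.1 _ (hchain i)
    have hinv := cnt_inv Wτ (Sum.inr i.castSucc) _ _ (Hchain i) hseq'
    have hM0 : M0 (Sum.inr i.castSucc) = 0 := hz _ (by simp)
    have hpos : 0 < cntF (fun t => if t = tn i.castSucc then 1 else 0) (l.take m.val) := by
      simp only [hM0] at hinv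
      omega
    obtain ⟨j, hj⟩ := exists_of_cnt_pos _ _ hpos
    have hjlt : (j : ℕ) < (l.take m.val).length := j.2
    have hjm : (j : ℕ) < (m : ℕ) := by
      simp [List.length_take] at hjlt
      omega
    have hjl : (j : ℕ) < l.length := lt_trans hjm m.2
    refine ⟨⟨j, hjl⟩, hjm, ?_⟩
    have : ((l.take m.val)[(j : ℕ)]).1 = tn i.castSucc := hj
    rw [List.getElem_take] at this
    exact this
  · -- second part: uniqueness
    intro hM1
    have Hstart : ∀ t M η M' η', ValidFiring Wτ M η t M' η' →
        M' (Sum.inl start) + (if t = tn 0 then 1 else 0) ≤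
          M (Sum.inl start) + (fun _ : Tτ => 0) t := by
      intro t M η M' η' hv
      have upd := hv.2.2.1 (Sum.inl start)
      have hnpost := hstart t
      by_cases htb : t = tn 0
      · have hp : Sum.inl start ∈ Wτ.pre t := by rw [htb, hpre0]; rfl
        have hM : M' (Sum.inl start) = M (Sum.inl start) - 1 := upd.1 ⟨hp, hnpost⟩
        have h0 : 0 < M (Sum.inl start) := hv.1 _ hp
        rw [if_pos htb, hM]
        omega
      · by_cases hp : Sum.inl start ∈ Wτ.pre t
        · have hM : M' (Sum.inl start) = M (Sum.inl start) - 1 := upd.1 ⟨hp, hnpost⟩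
          rw [if_neg htb, hM]
          omega
        · have hM := upd.2.2 (iff_of_false hp hnpost)
          rw [if_neg htb, hM]
    have once : ∀ i : Fin (n+1), cntF (fun t => if t = tn i then 1 else 0) l ≤ 1 := by
      intro i
      induction i using Fin.induction with
      | zero =>
          have hinv := cnt_inv Wτ (Sum.inl start) (fun _ => 0) _ Hstart h
          have hzero : cntF (fun _ : Tτ => 0)
              (l : List (Tτ × ((P ⊕ Fin (n+1)) → ℕ) × (V → Option O))) = 0 := by
            simp [cntF]
          simp only [hzero] at hinv
          simp only [hM1] at hinv
          omega
      | succ i ih =>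
          have hinv := cnt_inv Wτ (Sum.inr i.castSucc) _ _ (Hchain i) h
          have hM0 : M0 (Sum.inr i.castSucc) = 0 := hz _ (by simp)
          simp only [hM0] at hinv
          omega
    intro i m m' hm hm'
    by_contra hne
    have := two_le_cnt (tn i) l m m' hne hm hm'
    have := once i
    omega
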